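/- Let q be a power of 2, let 𝔽_q be the finite field with q elements, and let k ∈ 𝔽_q. Consider the homogeneous polynomial G_k = x²(x^q y − x y^q) + y²(y^q z − y z^q) + (z² + k xy)(z^q x − z x^q) ∈ 𝔽_q[x,y,z], which vanishes at every 𝔽_q-point of ℙ². Then the curve D_k = {G_k = 0} is smooth at every 𝔽_q-point of ℙ² (i.e., there is no nonzero triple (a,b,c) ∈ 𝔽_q³ at which G_k and all three partial derivatives ∂G_k/∂x, ∂G_k/∂y, ∂G_k/∂z vanish simultaneously) if and only if the polynomial t⁷ + k t⁵ + 1 has no zeros in 𝔽_q. -/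

import Mathlib

open MvPolynomial

/-- The plane-filling polynomial (for even `q`)
`G_k = x²(x^q y − x y^q) + y²(y^q z − y z^q) + (z² + k xy)(z^q x − z x^q)`. -/
noncomputable def planeFillingPolyEven {F : Type*} [Field F] (q : ℕ) (k : F) :
    MvPolynomial (Fin 3) F :=
  X 0 ^ 2 * (X 0 ^ q * X 1 - X 0 * X 1 ^ q)
    + X 1 ^ 2 * (X 1 ^ q * X 2 - X 1 * X 2 ^ q)
    + (X 2 ^ 2 + C k * X 0 * X 1) * (X 2 ^ q * X 0 - X 2 * X 0 ^ q)

/-- For `q` a power of `2`, the curve `D_k = {G_k = 0}` is smooth at every `𝔽_q`-point of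
`ℙ²` if and only if `t⁷ + k t⁵ + 1` has no zeros in `𝔽_q`. -/
theorem smooth_at_Fq_points_iff_even_q {F : Type*} [Field F] [Fintype F]
    (q : ℕ) (hq : Fintype.card F = q) (hq2 : ∃ m : ℕ, q = 2 ^ m) (k : F) :
    (∀ a b c : F, (a, b, c) ≠ (0, 0, 0) →
        ¬ (eval ![a, b, c] (planeFillingPolyEven q k) = 0 ∧
           eval ![a, b, c] (pderiv 0 (planeFillingPolyEven q k)) = 0 ∧
           eval ![a, b, c] (pderiv 1 (planeFillingPolyEven q k)) = 0 ∧
           eval ![a, b, c] (pderiv 2 (planeFillingPolyEven q k)) = 0)) ↔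
      ∀ t : F, t ^ 7 + k * t ^ 5 + 1 ≠ 0 := by
  haveI hchar : CharP F 2 := by
    obtain ⟨m, rfl⟩ := hq2
    have hp : (ringChar F).Prime := CharP.char_is_prime F _
    have hdvd : ringChar F ∣ 2 ^ m := by
      rw [← hq]
      exact (CharP.cast_eq_zero_iff F (ringChar F) _).mp (FiniteField.cast_card_eq_zero F)
    have h2 : ringChar F = 2 :=
      (Nat.prime_dvd_prime_iff_eq hp Nat.prime_two).mp (hp.dvd_of_dvd_pow hdvd)
    rw [← h2]; exact ringChar.charP F
  have h2 : (2 : F) = 0 := CharTwo.two_eq_zero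
  have hF : ∀ x : F, x ^ q = x := fun x => by rw [← hq]; exact FiniteField.pow_card x
  have hq0 : (q : F) = 0 := by rw [← hq]; exact FiniteField.cast_card_eq_zero F
  have key : ∀ a b c : F,
      eval ![a,b,c] (planeFillingPolyEven q k) = 0 ∧
      eval ![a,b,c] (pderiv 0 (planeFillingPolyEven q k)) = a^2*b + c^3 + k*a*b*c ∧
      eval ![a,b,c] (pderiv 1 (planeFillingPolyEven q k)) = a^3 + b^2*c ∧
      eval ![a,b,c] (pderiv 2 (planeFillingPolyEven q k)) = b^3 + a*c^2 + k*a^2*b := by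
    intro a b c
    refine ⟨?_, ?_, ?_, ?_⟩ <;>
      simp [planeFillingPolyEven, pderiv_mul, pderiv_pow, hF, hq0,
        CharTwo.sub_eq_add, CharTwo.neg_eq, h2]
    · linear_combination (a*c^3 + a^2*b*c*k + a^3*b + b^3*c) * h2
    · linear_combination (a*b*c*k) * h2
    · linear_combination (a^2*c*k) * h2
    · ring
  constructor
  · intro hsm t ht
    refine hsm (t^2) (t^3) 1 (by simp) ⟨(key _ _ _).1, ?_, ?_, ?_⟩
    · rw [(key (t^2) (t^3) 1).2.1]; linear_combination ht
    · rw [(key (t^2) (t^3) 1).2.2.1]; linear_combination t^6 * h2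
    · rw [(key (t^2) (t^3) 1).2.2.2]; linear_combination t^2 * ht
  · rintro hroot a b c hne ⟨-, h1, h2', h3⟩
    rw [(key a b c).2.1] at h1
    rw [(key a b c).2.2.1] at h2'
    rw [(key a b c).2.2.2] at h3
    by_cases ha : a = 0
    · subst ha
      by_cases hb : b = 0
      · subst hb
        have hc : c = 0 := by
          have : c ^ 3 = 0 := by linear_combination h1
          exact pow_eq_zero_iff (by norm_num) |>.mp this
        exact hne (by simp [hc])
      · have hc : c = 0 := by
          have hb2 : b ^ 2 * c = 0 := by linear_combination h2'
          rcases mul_eq_zero.mp hb2 with h | h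
          · exact absurd (pow_eq_zero_iff (by norm_num) |>.mp h) hb
          · exact h
        subst hc
        have : b ^ 3 = 0 := by linear_combination h3
        exact absurd (pow_eq_zero_iff (by norm_num) |>.mp this) hb
    · refine hroot (b / a) ?_
      have hT : a^2 * (b^7 + k*a^2*b^5 + a^7) = 0 := by
        linear_combination b^6 * h1 - (b^4*c^2 + a^3*b^2*c + a^6 + k*a*b^5) * h2'
          + a^3*(b^4*c^2 + a^3*b^2*c + a^6 + k*a*b^5) * h2
      have hT' : b^7 + k*a^2*b^5 + a^7 = 0 :=
        (mul_eq_zero.mp hT).resolve_left (pow_ne_zero 2 ha)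
      field_simp
      linear_combination hT'
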